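/- Let S be a finite set of steps (x, y) with x a positive integer and y an integer. For n ≥ 0 let f_n be the number of finite lists of steps from S whose x-components sum to n, whose y-prefix sums are all ≥ 0, and whose total y-sum is 0; let g_n be the number of such lists having at least 2 steps whose intermediate prefix y-sums (after 1, …, s−1 of the s steps) are all strictly positive. Set f(t) = Σ f_n tⁿ, g(t) = Σ g_n tⁿ, and r(t) = Σ_{(x,0)∈S} t^x. Then f = 1 + (g + r)·f as an identity in ℤ⟦t⟧ (first-return decomposition of excursions into irreducible pieces). -/

import Mathlib

open PowerSeries

/-- Generating function for excursions with step set `S ⊆ ℤ≥1 × ℤ`: the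
coefficient of `t^n` counts lists of steps from `S` whose `x`-components sum to
`n`, whose prefix `y`-sums are all `≥ 0`, and whose total `y`-sum is `0`. -/
noncomputable def excGF (S : Finset (ℕ × ℤ)) : PowerSeries ℤ :=
  PowerSeries.mk fun n =>
    (Nat.card {L : List (ℕ × ℤ) //
      (∀ s ∈ L, s ∈ S) ∧
      (L.map Prod.fst).sum = n ∧
      (∀ i : ℕ, 0 ≤ ((L.map Prod.snd).take i).sum) ∧
      (L.map Prod.snd).sum = 0} : ℤ)

/-- Generating function for irreducible excursions with step set `S`: the
coefficient of `t^n` counts excursions of length `n` having at least `2` steps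
whose intermediate prefix `y`-sums are all strictly positive. -/
noncomputable def irrGF (S : Finset (ℕ × ℤ)) : PowerSeries ℤ :=
  PowerSeries.mk fun n =>
    (Nat.card {L : List (ℕ × ℤ) //
      (∀ s ∈ L, s ∈ S) ∧
      (L.map Prod.fst).sum = n ∧
      (∀ i : ℕ, 0 ≤ ((L.map Prod.snd).take i).sum) ∧
      (L.map Prod.snd).sum = 0 ∧
      2 ≤ L.length ∧
      (∀ i : ℕ, 1 ≤ i → i ≤ L.length - 1 → 0 < ((L.map Prod.snd).take i).sum)} : ℤ)

/-- The generating function `r(t) = ∑_{(x,0) ∈ S} t^x` for the horizontal steps of `S`. -/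
noncomputable def horizGF (S : Finset (ℕ × ℤ)) : PowerSeries ℤ :=
  ∑ s ∈ S.filter (fun s => s.2 = 0), (X : PowerSeries ℤ) ^ s.1


namespace FRaux

/-- prefix sum of the `y`-components -/
def ps (L : List (ℕ × ℤ)) (i : ℕ) : ℤ := ((L.map Prod.snd).take i).sum

/-- excursion predicate -/
def ExcP (S : Finset (ℕ × ℤ)) (n : ℕ) (L : List (ℕ × ℤ)) : Prop :=
  (∀ s ∈ L, s ∈ S) ∧
  (L.map Prod.fst).sum = n ∧
  (∀ i : ℕ, 0 ≤ ((L.map Prod.snd).take i).sum) ∧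
  (L.map Prod.snd).sum = 0

/-- irreducible excursion predicate -/
def IrrP (S : Finset (ℕ × ℤ)) (n : ℕ) (L : List (ℕ × ℤ)) : Prop :=
  ExcP S n L ∧ 2 ≤ L.length ∧
  (∀ i : ℕ, 1 ≤ i → i ≤ L.length - 1 → 0 < ((L.map Prod.snd).take i).sum)

/-- atoms of the first-return factorization: irreducible excursions or single
horizontal steps -/
def AtomP (S : Finset (ℕ × ℤ)) (k : ℕ) (A : List (ℕ × ℤ)) : Prop :=
  (∀ s ∈ A, s ∈ S) ∧
  (A.map Prod.fst).sum = k ∧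
  (∀ i : ℕ, 0 ≤ ps A i) ∧
  (A.map Prod.snd).sum = 0 ∧
  1 ≤ A.length ∧
  (∀ i : ℕ, 1 ≤ i → i ≤ A.length - 1 → 0 < ps A i)

lemma ps_zero (L : List (ℕ × ℤ)) : ps L 0 = 0 := rfl

lemma ps_of_le (L : List (ℕ × ℤ)) {i : ℕ} (h : L.length ≤ i) :
    ps L i = (L.map Prod.snd).sum := by
  unfold ps
  rw [List.take_of_length_le (by simpa using h)]

lemma ps_length (L : List (ℕ × ℤ)) : ps L L.length = (L.map Prod.snd).sum :=
  ps_of_le L le_rfl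

lemma ps_append (A B : List (ℕ × ℤ)) (i : ℕ) :
    ps (A ++ B) i = ps A i + ps B (i - A.length) := by
  unfold ps
  rw [List.map_append, List.take_append, List.sum_append, List.length_map]

lemma ps_take (L : List (ℕ × ℤ)) (j i : ℕ) : ps (L.take j) i = ps L (min i j) := by
  unfold ps
  rw [List.map_take, List.take_take]

lemma ps_drop (L : List (ℕ × ℤ)) (j i : ℕ) :
    ps L j + ps (L.drop j) i = ps L (j + i) := by
  unfold ps
  rw [List.map_drop, List.take_add, List.sum_append]

lemma length_le_of_mem {S : Finset (ℕ × ℤ)} (hS : ∀ s ∈ S, 0 < s.1)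
    {L : List (ℕ × ℤ)} (hL : ∀ s ∈ L, s ∈ S) :
    L.length ≤ (L.map Prod.fst).sum := by
  have := List.length_le_sum_of_one_le (L.map Prod.fst) ?_
  · simpa using this
  · intro i hi
    rcases List.mem_map.1 hi with ⟨s, hs, rfl⟩
    exact hS s (hL s hs)

lemma excP_finite (S : Finset (ℕ × ℤ)) (hS : ∀ s ∈ S, 0 < s.1) (n : ℕ) :
    {L : List (ℕ × ℤ) | ExcP S n L}.Finite := by
  apply Set.Finite.subset
    (((List.finite_length_le {x : ℕ × ℤ // x ∈ S} n).image (List.map Subtype.val)))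
  intro L hL
  obtain ⟨h1, h2, h3, h4⟩ := hL
  refine ⟨L.attachWith (· ∈ S) h1, ?_, ?_⟩
  · simp only [Set.mem_setOf_eq, List.length_attachWith]
    calc L.length ≤ (L.map Prod.fst).sum := length_le_of_mem hS h1
    _ = n := h2
  · simp [List.attachWith_map_subtype_val, List.attach_map_subtype_val]

lemma irrP_finite (S : Finset (ℕ × ℤ)) (hS : ∀ s ∈ S, 0 < s.1) (n : ℕ) :
    {L : List (ℕ × ℤ) | IrrP S n L}.Finite :=
  (excP_finite S hS n).subset (fun _ h => h.1)

lemma atomP_of_irrP {S : Finset (ℕ × ℤ)} {k : ℕ} {A : List (ℕ × ℤ)}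
    (h : IrrP S k A) : AtomP S k A := by
  obtain ⟨⟨h1, h2, h3, h4⟩, h5, h6⟩ := h
  exact ⟨h1, h2, h3, h4, by omega, h6⟩

lemma atomP_of_hor {S : Finset (ℕ × ℤ)} {k : ℕ} {s : ℕ × ℤ}
    (hs : s ∈ S) (h0 : s.2 = 0) (hk : s.1 = k) : AtomP S k [s] := by
  refine ⟨by simpa using hs, by simpa using hk, ?_, by simpa using h0, by simp, ?_⟩
  · intro i
    cases i with
    | zero => simp [ps]
    | succ m => simp [ps, h0]
  · intro i h1 h2
    simp at h2
    omega

lemma excP_append {S : Finset (ℕ × ℤ)} {k m : ℕ} {A B : List (ℕ × ℤ)}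
    (hA : AtomP S k A) (hB : ExcP S m B) : ExcP S (k + m) (A ++ B) := by
  obtain ⟨a1, a2, a3, a4, a5, a6⟩ := hA
  obtain ⟨b1, b2, b3, b4⟩ := hB
  refine ⟨?_, ?_, ?_, ?_⟩
  · intro s hs
    rcases List.mem_append.1 hs with h | h
    · exact a1 s h
    · exact b1 s h
  · rw [List.map_append, List.sum_append, a2, b2]
  · intro i
    show 0 ≤ ps (A ++ B) i
    rw [ps_append]
    have b3' : ∀ i, 0 ≤ ps B i := b3
    exact add_nonneg (a3 i) (b3' _)
  · rw [List.map_append, List.sum_append, a4, b4, add_zero]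

lemma ps_append_of_le {A B : List (ℕ × ℤ)} {i : ℕ} (h : i ≤ A.length) :
    ps (A ++ B) i = ps A i := by
  rw [ps_append, Nat.sub_eq_zero_of_le h, ps_zero, add_zero]

lemma ps_append_length {A B : List (ℕ × ℤ)} (hA : (A.map Prod.snd).sum = 0) :
    ps (A ++ B) A.length = 0 := by
  rw [ps_append_of_le le_rfl, ps_length, hA]

/-- the first return to level `0` of `A ++ B` is at time `A.length` -/
lemma first_return_ne {S : Finset (ℕ × ℤ)} {k : ℕ} {A B : List (ℕ × ℤ)}
    (hA : AtomP S k A) {i : ℕ} (h1 : 1 ≤ i) (h2 : i < A.length) :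
    ps (A ++ B) i ≠ 0 := by
  rw [ps_append_of_le h2.le]
  have := hA.2.2.2.2.2 i h1 (by omega)
  omega

lemma len_eq {S : Finset (ℕ × ℤ)} {k₁ k₂ : ℕ} {A₁ A₂ B₁ B₂ : List (ℕ × ℤ)}
    (hA₁ : AtomP S k₁ A₁) (hA₂ : AtomP S k₂ A₂)
    (h : A₁ ++ B₁ = A₂ ++ B₂) : A₁.length = A₂.length := by
  by_contra hne
  rcases Nat.lt_or_ge A₁.length A₂.length with hlt | hge
  · have h0 : ps (A₁ ++ B₁) A₁.length = 0 := ps_append_length hA₁.2.2.2.1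
    have := first_return_ne hA₂ (B := B₂) hA₁.2.2.2.2.1 hlt
    rw [← h] at this
    exact this h0
  · have hlt : A₂.length < A₁.length := by omega
    have h0 : ps (A₂ ++ B₂) A₂.length = 0 := ps_append_length hA₂.2.2.2.1
    have := first_return_ne hA₁ (B := B₁) hA₂.2.2.2.2.1 hlt
    rw [h] at this
    exact this h0

lemma decompose {S : Finset (ℕ × ℤ)} {n : ℕ} {L : List (ℕ × ℤ)}
    (hL : ExcP S n L) (hne : L ≠ []) :
    ∃ k A B, k ≤ n ∧ AtomP S k A ∧ ExcP S (n - k) B ∧ A ++ B = L := by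
  obtain ⟨h1, h2, h3, h4⟩ := hL
  have hlen : 1 ≤ L.length := List.length_pos_iff.2 hne
  have hex : ∃ i, 1 ≤ i ∧ ps L i = 0 := ⟨L.length, hlen, by rw [ps_length]; exact h4⟩
  classical
  set j := Nat.find hex with hj
  obtain ⟨hj1, hj0⟩ := Nat.find_spec hex
  have hjle : j ≤ L.length := Nat.find_le ⟨hlen, by rw [ps_length]; exact h4⟩
  have hmin : ∀ i, 1 ≤ i → i < j → ps L i ≠ 0 := fun i hi1 hij hi0 =>
    Nat.find_min hex hij ⟨hi1, hi0⟩
  set A := L.take j with hA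
  set B := L.drop j with hB
  have hAlen : A.length = j := by simp [hA, List.length_take, Nat.min_eq_left hjle]
  have hxsplit : (A.map Prod.fst).sum + (B.map Prod.fst).sum = n := by
    rw [← List.sum_append, ← List.map_append, List.take_append_drop, h2]
  refine ⟨(A.map Prod.fst).sum, A, B, by omega, ?_, ?_, List.take_append_drop j L⟩
  · refine ⟨fun s hs => h1 s (List.take_subset j L hs), rfl, ?_, ?_, by omega, ?_⟩
    · intro i
      rw [hA, ps_take]
      exact h3 _
    · have hj0' : ps L j = 0 := hj0
      rw [← ps_length, hAlen, hA, ps_take, Nat.min_self]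
      exact hj0'
    · intro i hi1 hi2
      rw [hA, ps_take]
      have hij : i < j := by omega
      rw [Nat.min_eq_left hij.le]
      have hne' := hmin i hi1 hij
      have hge : 0 ≤ ps L i := h3 i
      omega
  · refine ⟨fun s hs => h1 s (List.drop_subset j L hs), by omega, ?_, ?_⟩
    · intro i
      show 0 ≤ ps B i
      have hj0' : ps L j = 0 := hj0
      have hd := ps_drop L j i
      have h3' : 0 ≤ ps L (j + i) := h3 (j + i)
      rw [hB]
      linarith
    · have hj0' : ps L j = 0 := hj0
      have hBlen : B.length = L.length - j := by simp [hB]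
      have hd := ps_drop L j B.length
      rw [hj0', zero_add, ps_length, hBlen] at hd
      have hje : j + (L.length - j) = L.length := by omega
      rw [hd, hje, ps_length]
      exact h4

noncomputable def ExcF (S : Finset (ℕ × ℤ)) (hS : ∀ s ∈ S, 0 < s.1) (n : ℕ) :
    Finset (List (ℕ × ℤ)) := (excP_finite S hS n).toFinset

noncomputable def IrrF (S : Finset (ℕ × ℤ)) (hS : ∀ s ∈ S, 0 < s.1) (n : ℕ) :
    Finset (List (ℕ × ℤ)) := (irrP_finite S hS n).toFinset

def HorF (S : Finset (ℕ × ℤ)) (k : ℕ) : Finset (ℕ × ℤ) :=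
  S.filter (fun s => s.2 = 0 ∧ s.1 = k)

lemma mem_ExcF {S : Finset (ℕ × ℤ)} {hS : ∀ s ∈ S, 0 < s.1} {n : ℕ}
    {L : List (ℕ × ℤ)} : L ∈ ExcF S hS n ↔ ExcP S n L := Set.Finite.mem_toFinset _

lemma mem_IrrF {S : Finset (ℕ × ℤ)} {hS : ∀ s ∈ S, 0 < s.1} {n : ℕ}
    {L : List (ℕ × ℤ)} : L ∈ IrrF S hS n ↔ IrrP S n L := Set.Finite.mem_toFinset _

lemma excP_zero {S : Finset (ℕ × ℤ)} (hS : ∀ s ∈ S, 0 < s.1)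
    {L : List (ℕ × ℤ)} : ExcP S 0 L ↔ L = [] := by
  constructor
  · rintro ⟨h1, h2, h3, h4⟩
    have := length_le_of_mem hS h1
    rw [h2] at this
    exact List.eq_nil_of_length_eq_zero (by omega)
  · rintro rfl
    exact ⟨by simp, by simp, by simp, by simp⟩

lemma atom_of_mem {S : Finset (ℕ × ℤ)} {hS : ∀ s ∈ S, 0 < s.1} {k : ℕ}
    {a : List (ℕ × ℤ) ⊕ (ℕ × ℤ)} (ha : a ∈ (IrrF S hS k).disjSum (HorF S k)) :
    AtomP S k (Sum.elim id (fun s => [s]) a) := by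
  cases a with
  | inl A =>
    rw [Finset.inl_mem_disjSum, mem_IrrF] at ha
    exact atomP_of_irrP ha
  | inr s =>
    rw [Finset.inr_mem_disjSum] at ha
    obtain ⟨hs, h0, hk⟩ := Finset.mem_filter.1 ha
    · exact atomP_of_hor hs h0 hk

lemma main_count (S : Finset (ℕ × ℤ)) (hS : ∀ s ∈ S, 0 < s.1) (n : ℕ) :
    (ExcF S hS n).card = (if n = 0 then 1 else 0)
      + ∑ k ∈ Finset.range (n + 1),
          ((IrrF S hS k).card + (HorF S k).card) * (ExcF S hS (n - k)).card := by
  classical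
  set T : Finset (Σ _ : ℕ, (List (ℕ × ℤ) ⊕ (ℕ × ℤ)) × List (ℕ × ℤ)) :=
    (Finset.range (n + 1)).sigma
      (fun k => ((IrrF S hS k).disjSum (HorF S k)) ×ˢ ExcF S hS (n - k)) with hT
  have hTcard : T.card = ∑ k ∈ Finset.range (n + 1),
      ((IrrF S hS k).card + (HorF S k).card) * (ExcF S hS (n - k)).card := by
    rw [hT, Finset.card_sigma]
    exact Finset.sum_congr rfl (fun k _ => by
      rw [Finset.card_product, Finset.card_disjSum])
  have hbij : T.card = (ExcF S hS n \ {[]}).card := by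
    apply Finset.card_bij (fun p _ => (Sum.elim id (fun s => [s]) p.2.1) ++ p.2.2)
    · rintro ⟨k, a, B⟩ hp
      rw [hT, Finset.mem_sigma, Finset.mem_product] at hp
      obtain ⟨hk, ha, hB⟩ := hp
      have hatom := atom_of_mem (hS := hS) ha
      have hBex := mem_ExcF.1 hB
      have hkn : k ≤ n := by simpa [Nat.lt_succ_iff] using hk
      have hex := excP_append hatom hBex
      rw [Finset.mem_sdiff, Finset.mem_singleton, mem_ExcF]
      constructor
      · have : k + (n - k) = n := by omega
        rwa [this] at hex
      · intro hnil
        have := hatom.2.2.2.2.1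
        rw [List.append_eq_nil_iff] at hnil
        rw [hnil.1] at this
        simp at this
    · rintro ⟨k₁, a₁, B₁⟩ hp₁ ⟨k₂, a₂, B₂⟩ hp₂ heq
      rw [hT, Finset.mem_sigma, Finset.mem_product] at hp₁ hp₂
      obtain ⟨hk₁, ha₁, hB₁⟩ := hp₁
      obtain ⟨hk₂, ha₂, hB₂⟩ := hp₂
      dsimp only at ha₁ ha₂ hB₁ hB₂
      have hatom₁ := atom_of_mem (hS := hS) ha₁
      have hatom₂ := atom_of_mem (hS := hS) ha₂
      simp only at heq
      have hlen := len_eq hatom₁ hatom₂ heq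
      obtain ⟨hAeq, hBeq⟩ := List.append_inj heq hlen
      have hkeq : k₁ = k₂ := by
        rw [← hatom₁.2.1, ← hatom₂.2.1, hAeq]
      subst hkeq
      subst hBeq
      have haeq : a₁ = a₂ := by
        cases a₁ with
        | inl A₁ =>
          cases a₂ with
          | inl A₂ => simpa using hAeq
          | inr s₂ =>
            rw [Finset.inl_mem_disjSum, mem_IrrF] at ha₁
            have h2 := ha₁.2.1
            simp only [Sum.elim_inl, Sum.elim_inr, id] at hAeq
            rw [hAeq] at h2
            simp at h2
        | inr s₁ =>
          cases a₂ with
          | inl A₂ =>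
            rw [Finset.inl_mem_disjSum, mem_IrrF] at ha₂
            have h2 := ha₂.2.1
            simp only [Sum.elim_inl, Sum.elim_inr, id] at hAeq
            rw [← hAeq] at h2
            simp at h2
          | inr s₂ => simpa using hAeq
      rw [haeq]
    · intro L hL
      rw [Finset.mem_sdiff, Finset.mem_singleton, mem_ExcF] at hL
      obtain ⟨hLex, hLne⟩ := hL
      obtain ⟨k, A, B, hkn, hatom, hB, heq⟩ := decompose hLex hLne
      have hmemB : B ∈ ExcF S hS (n - k) := mem_ExcF.2 hB
      have hk : k ∈ Finset.range (n + 1) := Finset.mem_range.2 (by omega)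
      rcases Nat.lt_or_ge A.length 2 with hlt | hge
      · -- A is a single horizontal step
        have hlen1 : A.length = 1 := by
          have := hatom.2.2.2.2.1; omega
        obtain ⟨s, rfl⟩ := List.length_eq_one_iff.1 hlen1
        have hs : s ∈ S := hatom.1 s (by simp)
        have h0 : s.2 = 0 := by simpa using hatom.2.2.2.1
        have hk1 : s.1 = k := by simpa using hatom.2.1
        refine ⟨⟨k, (Sum.inr s, B)⟩, ?_, ?_⟩
        · rw [hT, Finset.mem_sigma, Finset.mem_product]
          exact ⟨hk, Finset.inr_mem_disjSum.2 (Finset.mem_filter.2 ⟨hs, h0, hk1⟩), hmemB⟩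
        · simpa using heq
      · -- A is irreducible
        have hirr : IrrP S k A :=
          ⟨⟨hatom.1, hatom.2.1, hatom.2.2.1, hatom.2.2.2.1⟩, hge, hatom.2.2.2.2.2⟩
        refine ⟨⟨k, (Sum.inl A, B)⟩, ?_, ?_⟩
        · rw [hT, Finset.mem_sigma, Finset.mem_product]
          exact ⟨hk, Finset.inl_mem_disjSum.2 (mem_IrrF.2 hirr), hmemB⟩
        · simpa using heq
  rw [← hTcard, hbij]
  by_cases hn : n = 0
  · subst hn
    have hE : ExcF S hS 0 = {[]} := by
      ext L
      rw [mem_ExcF, excP_zero hS, Finset.mem_singleton]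
    rw [hE]
    simp
  · have hnil : [] ∉ ExcF S hS n := by
      rw [mem_ExcF]
      rintro ⟨-, h2, -, -⟩
      simp at h2
      omega
    rw [if_neg hn]
    have : ExcF S hS n \ {[]} = ExcF S hS n := by
      ext L
      rw [Finset.mem_sdiff, Finset.mem_singleton]
      constructor
      · exact fun h => h.1
      · intro h
        exact ⟨h, fun hLnil => hnil (hLnil ▸ h)⟩
    rw [this]
    omega

-- coefficient computations

lemma coeff_excGF (S : Finset (ℕ × ℤ)) (hS : ∀ s ∈ S, 0 < s.1) (n : ℕ) :
    (PowerSeries.coeff (R := ℤ) n) (excGF S) = ((ExcF S hS n).card : ℤ) := by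
  rw [excGF, PowerSeries.coeff_mk]
  congr 1
  rw [← Nat.card_eq_finsetCard]
  exact Nat.card_congr (Equiv.subtypeEquivRight (fun L => mem_ExcF.symm))

lemma coeff_irrGF (S : Finset (ℕ × ℤ)) (hS : ∀ s ∈ S, 0 < s.1) (n : ℕ) :
    (PowerSeries.coeff (R := ℤ) n) (irrGF S) = ((IrrF S hS n).card : ℤ) := by
  rw [irrGF, PowerSeries.coeff_mk]
  congr 1
  rw [← Nat.card_eq_finsetCard]
  refine Nat.card_congr (Equiv.subtypeEquivRight (fun L => ?_))
  rw [mem_IrrF]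
  unfold IrrP ExcP
  tauto

lemma coeff_horizGF (S : Finset (ℕ × ℤ)) (n : ℕ) :
    (PowerSeries.coeff (R := ℤ) n) (horizGF S) = ((HorF S n).card : ℤ) := by
  classical
  rw [horizGF, map_sum]
  simp only [PowerSeries.coeff_X_pow]
  rw [Finset.sum_boole]
  congr 1
  rw [HorF, Finset.filter_filter]
  congr 1
  apply Finset.filter_congr
  intro s _
  simp [eq_comm]

end FRaux

theorem first_return_decomposition (S : Finset (ℕ × ℤ)) (hS : ∀ s ∈ S, 0 < s.1) :
    excGF S = 1 + (irrGF S + horizGF S) * excGF S := by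
  ext n
  rw [map_add, PowerSeries.coeff_one, PowerSeries.coeff_mul,
    Finset.Nat.sum_antidiagonal_eq_sum_range_succ_mk]
  simp only [map_add, FRaux.coeff_excGF S hS, FRaux.coeff_irrGF S hS, FRaux.coeff_horizGF S]
  have := FRaux.main_count S hS n
  push_cast [this]
  ring
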